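/- Let n ≥ 3 be a natural number and 2 ≤ p ≤ n real. Set p' = p/(p-1), κ = n^{-1/(p-1)}(p-1), β = n/p', t₀ = κ/(β+1), g(t) = (2/e)(e^{-2t}(t+1)+t-1)/t, and I = (κ/p') e^{-κ} ∫₀¹ t^{β} e^{κ t} dt. Then I > (1/p') · (t₀/(t₀+1)) · (1 + g(t₀)/κ). -/
import Mathlib

open Real Set intervalIntegral MeasureTheory


lemma contOn_log_mul_rpow {r : ℝ} (hr : 0 < r) :
    ContinuousOn (fun t : ℝ => Real.log t * t ^ r) (Set.Icc 0 1) := by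
  intro x hx
  rcases eq_or_lt_of_le hx.1 with h0 | h0
  · subst h0
    rw [← continuousWithinAt_diff_self]
    have hsub : Set.Icc (0:ℝ) 1 \ {0} ⊆ Set.Ioi 0 := fun y hy =>
      lt_of_le_of_ne hy.1.1 (Ne.symm (by simpa using hy.2))
    have h := tendsto_log_mul_rpow_nhdsGT_zero hr
    have : Real.log 0 * (0:ℝ) ^ r = 0 := by
      rw [Real.log_zero, zero_mul]
    unfold ContinuousWithinAt
    simp only [this]
    exact h.mono_left (nhdsWithin_mono _ hsub)
  · exact ((Real.continuousAt_log (ne_of_gt h0)).mul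
      (Real.continuousAt_rpow_const x r (Or.inl (ne_of_gt h0)))).continuousWithinAt

lemma intInt_rpow_mul_log {c : ℝ} (hc : 0 < c) :
    IntervalIntegrable (fun t : ℝ => t ^ c * Real.log t) MeasureTheory.volume 0 1 := by
  have h : ContinuousOn (fun t : ℝ => Real.log t * t ^ c) (Set.Icc 0 1) := contOn_log_mul_rpow hc
  have h2 : ContinuousOn (fun t : ℝ => t ^ c * Real.log t) (Set.uIcc (0:ℝ) 1) := by
    rw [Set.uIcc_of_le (by norm_num : (0:ℝ) ≤ 1)]
    simpa only [mul_comm] using h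
  exact h2.intervalIntegrable

lemma integral_rpow_mul_log {c : ℝ} (hc : 0 < c) :
    ∫ t in (0:ℝ)..1, t ^ c * Real.log t = -(1 / (c + 1) ^ 2) := by
  have hc1 : c + 1 ≠ 0 := by positivity
  set F : ℝ → ℝ := fun t => Real.log t * t ^ (c+1) / (c+1) - t ^ (c+1) / (c+1)^2 with hF
  have hcont : ContinuousOn F (Set.Icc 0 1) := by
    apply ((contOn_log_mul_rpow (by linarith : (0:ℝ) < c+1)).div_const _).sub
    intro x _
    exact ((Real.continuousAt_rpow_const x (c+1) (Or.inr (by linarith))).div_const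
      _).continuousWithinAt
  have hderiv : ∀ x ∈ Set.Ioo (0:ℝ) 1, HasDerivAt F (x ^ c * Real.log x) x := by
    intro x hx
    have hx0 : x ≠ 0 := ne_of_gt hx.1
    have h1 : HasDerivAt (fun t : ℝ => t ^ (c+1)) ((c+1) * x ^ c) x := by
      have := Real.hasDerivAt_rpow_const (p := c+1) (Or.inl hx0)
      simpa using this
    have hlog : HasDerivAt Real.log x⁻¹ x := Real.hasDerivAt_log hx0
    have h2 : HasDerivAt (fun t : ℝ => Real.log t * t ^ (c+1))
        (x⁻¹ * x ^ (c+1) + Real.log x * ((c+1) * x ^ c)) x := hlog.mul h1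
    have h3 : HasDerivAt F
        ((x⁻¹ * x ^ (c+1) + Real.log x * ((c+1) * x ^ c)) / (c+1)
          - (c+1) * x ^ c / (c+1)^2) x := (h2.div_const _).sub (h1.div_const _)
    convert h3 using 1
    have hxc : x ^ (c+1) = x ^ c * x := by
      rw [Real.rpow_add hx.1, Real.rpow_one]
    rw [hxc]
    field_simp
    ring
  have hint : IntervalIntegrable (fun t : ℝ => t ^ c * Real.log t)
      MeasureTheory.volume 0 1 := intInt_rpow_mul_log hc
  have := intervalIntegral.integral_eq_sub_of_hasDeriv_right_of_le (by norm_num : (0:ℝ) ≤ 1)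
    hcont (fun x hx => (hderiv x hx).hasDerivWithinAt) hint
  rw [this, hF]
  simp only [Real.log_one, Real.one_rpow, Real.log_zero, Real.zero_rpow hc1]
  ring



noncomputable def g (t : ℝ) : ℝ :=
  (2 / Real.exp 1) * (Real.exp (-2 * t) * (t + 1) + t - 1) / t

set_option maxHeartbeats 2000000 in
lemma key_ineq {t : ℝ} (ht0 : 0 < t) (ht1 : t ≤ 1) :
    g t < 5 * t^2 / ((1 + t) * (5 * t + 7)) := by
  set P : ℝ := 1 + 2*t + 2*t^2 + (4/3)*t^3 + (2/3)*t^4 + (4/15)*t^5 + (4/45)*t^6 + (8/315)*t^7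
    with hPdef
  have hP : 0 < P := by positivity
  have hPle : P ≤ Real.exp (2*t) := by
    have h := Real.sum_le_exp_of_nonneg (by linarith : (0:ℝ) ≤ 2*t) 8
    simp [Finset.sum_range_succ, Nat.factorial] at h
    rw [hPdef]
    nlinarith [h]
  have h1 : Real.exp (-2*t) * P ≤ 1 := by
    rw [show (-2:ℝ)*t = -(2*t) by ring, Real.exp_neg]
    calc (Real.exp (2*t))⁻¹ * P ≤ (Real.exp (2*t))⁻¹ * Real.exp (2*t) :=
          mul_le_mul_of_nonneg_left hPle (inv_nonneg.2 (Real.exp_pos _).le)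
      _ = 1 := inv_mul_cancel₀ (Real.exp_pos _).ne'
  have hA : (Real.exp (-2*t)*(t+1)+t-1) * P ≤ (t+1) + (t-1)*P := by
    nlinarith [mul_le_mul_of_nonneg_right h1 (by linarith : (0:ℝ) ≤ t+1)]
  -- polynomial inequality
  have ht2 : t^2 ≤ 1 := by nlinarith
  have ht3 : t^3 ≤ t^2 := by nlinarith
  have ht4 : t^4 ≤ t^2 := by nlinarith [sq_nonneg t, sq_nonneg (t^2)]
  have ht5 : t^5 ≤ t^2 := by nlinarith [pow_nonneg ht0.le 3, pow_nonneg ht0.le 2]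
  have ht6 : t^6 ≤ t^2 := by nlinarith [pow_nonneg ht0.le 4, pow_nonneg ht0.le 2]
  have ht7 : (0:ℝ) ≤ t^7 := by positivity
  have hq : (0:ℝ) ≤ (25548454849/6000000000) + (5548454849/3000000000)*t
      - (3251545151/3000000000)*t^2 - (2851545151/4500000000)*t^3
      - (851545151/9000000000)*t^4 - (1720272019/52500000000)*t^5
      - (817181717/22500000000)*t^6 + (2394272761/26250000000)*t^7 := by
    nlinarith [ht2, ht3, ht4, ht5, ht6, ht7, ht0.le]
  have hq3 : (0:ℝ) ≤ t^3 * ((25548454849/6000000000) + (5548454849/3000000000)*t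
      - (3251545151/3000000000)*t^2 - (2851545151/4500000000)*t^3
      - (851545151/9000000000)*t^4 - (1720272019/52500000000)*t^5
      - (817181717/22500000000)*t^6 + (2394272761/26250000000)*t^7) :=
    mul_nonneg (by positivity) hq
  have hid : 5*(27182818283/10000000000:ℝ)*t^3*P - 2*((t+1)+(t-1)*P)*((1+t)*(5*t+7))
      = t^3 * ((25548454849/6000000000) + (5548454849/3000000000)*t
      - (3251545151/3000000000)*t^2 - (2851545151/4500000000)*t^3
      - (851545151/9000000000)*t^4 - (1720272019/52500000000)*t^5
      - (817181717/22500000000)*t^6 + (2394272761/26250000000)*t^7) := by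
    rw [hPdef]; ring
  have hpoly : 2*((t+1)+(t-1)*P)*((1+t)*(5*t+7)) ≤ 5*(27182818283/10000000000:ℝ)*t^3*P := by
    linarith [hq3, hid]
  have hE : (27182818283/10000000000:ℝ) < Real.exp 1 := by
    have := Real.exp_one_gt_d9
    norm_num at this ⊢
    linarith
  have hEt : 5*(27182818283/10000000000:ℝ)*t^3*P < 5*Real.exp 1*t^3*P := by
    have h5 : (0:ℝ) < 5*t^3*P := by positivity
    nlinarith [mul_lt_mul_of_pos_right hE h5]
  -- assemble
  have hden : (0:ℝ) < (1+t)*(5*t+7) := by positivity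
  have hgt : g t = 2*(Real.exp (-2*t)*(t+1)+t-1)/(Real.exp 1 * t) := by
    rw [g]
    field_simp
  rw [hgt, div_lt_div_iff₀ (by positivity) hden]
  -- goal : 2*A*((1+t)*(5*t+7)) < 5*t^2*(Real.exp 1 * t)
  have hcancel : 2*(Real.exp (-2*t)*(t+1)+t-1)*((1+t)*(5*t+7))*P < 5*t^2*(Real.exp 1*t)*P := by
    calc 2*(Real.exp (-2*t)*(t+1)+t-1)*((1+t)*(5*t+7))*P
        = 2*((Real.exp (-2*t)*(t+1)+t-1)*P)*((1+t)*(5*t+7)) := by ring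
      _ ≤ 2*((t+1)+(t-1)*P)*((1+t)*(5*t+7)) := by nlinarith [hA, hden]
      _ ≤ 5*(27182818283/10000000000:ℝ)*t^3*P := hpoly
      _ < 5*Real.exp 1*t^3*P := hEt
      _ = 5*t^2*(Real.exp 1*t)*P := by ring
  exact lt_of_mul_lt_mul_right hcancel hP.le

set_option maxHeartbeats 1000000 in
theorem stmt_15 (n : ℕ) (hn : 3 ≤ n) (p p' κ β t₀ I : ℝ)
    (hp2 : 2 ≤ p) (hpn : p ≤ n)
    (hp' : p' = p / (p - 1))
    (hκ : κ = (n : ℝ) ^ (-(1 / (p - 1))) * (p - 1))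
    (hβ : β = n / p')
    (ht₀ : t₀ = κ / (β + 1))
    (hI : I = (κ / p') * Real.exp (-κ) * ∫ t in (0:ℝ)..1, t ^ β * Real.exp (κ * t)) :
    I > (1 / p') * (t₀ / (t₀ + 1)) * (1 + g t₀ / κ) := by
  have hppos : (0:ℝ) < p := by linarith
  have hp1pos : (0:ℝ) < p - 1 := by linarith
  have hn3 : (3:ℝ) ≤ (n:ℝ) := by exact_mod_cast hn
  have hnpos : (0:ℝ) < n := by linarith
  have hκpos : 0 < κ := by
    rw [hκ]; exact mul_pos (Real.rpow_pos_of_pos hnpos _) hp1pos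
  have hκlt : κ < p - 1 := by
    rw [hκ]
    have h1 : (n:ℝ) ^ (-(1/(p-1))) < 1 :=
      Real.rpow_lt_one_of_one_lt_of_neg (by linarith)
        (by have : (0:ℝ) < 1/(p-1) := by positivity
            linarith)
    nlinarith [h1, hp1pos]
  have hp'pos : 0 < p' := by rw [hp']; positivity
  have hβval : β = n * (p-1) / p := by
    rw [hβ, hp']; field_simp
  have hβge : p - 1 ≤ β := by
    rw [hβval, le_div_iff₀ hppos]; nlinarith
  have hβ32 : 3/2 ≤ β := by
    rw [hβval, le_div_iff₀ hppos]; nlinarith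
  set b : ℝ := β + 1 with hb
  have hbpos : (0:ℝ) < b := by simp only [hb]; linarith
  have hb52 : (5/2:ℝ) ≤ b := by simp only [hb]; linarith
  have ht0pos : 0 < t₀ := by rw [ht₀]; positivity
  have ht0lt1 : t₀ < 1 := by
    rw [ht₀, div_lt_one hbpos]; simp only [hb]; linarith
  set a : ℝ := β + κ with ha
  have hapos : 0 < a := by simp only [ha]; linarith
  set m : ℝ := a + 1 with hm
  have hm1 : (1:ℝ) < m := by simp only [hm]; linarith
  have hmpos : (0:ℝ) < m := by linarith
  -- κ and m in terms of b, t₀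
  have hκeq : κ = t₀ * b := by rw [ht₀]; field_simp
  have hmeq : m = b * (1 + t₀) := by
    simp only [hm, ha, hb]; rw [hκeq]; ring
  -- the pointwise lower bound function
  set L : ℝ → ℝ := fun t => Real.exp κ * (1-κ) * t ^ a + Real.exp κ * κ * t ^ (a+1)
      + (-(Real.exp κ * κ)) * (t ^ a * Real.log t) with hL
  have IL1 : IntervalIntegrable (fun t : ℝ => t ^ a) volume 0 1 :=
    intervalIntegral.intervalIntegrable_rpow' (by linarith)
  have IL2 : IntervalIntegrable (fun t : ℝ => t ^ (a+1)) volume 0 1 :=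
    intervalIntegral.intervalIntegrable_rpow' (by linarith)
  have IL3 : IntervalIntegrable (fun t : ℝ => t ^ a * Real.log t) volume 0 1 :=
    intInt_rpow_mul_log hapos
  have IL : IntervalIntegrable L volume 0 1 := by
    apply IntervalIntegrable.add
    apply IntervalIntegrable.add
    · exact IL1.const_mul _
    · exact IL2.const_mul _
    · exact IL3.const_mul _
  have IU : IntervalIntegrable (fun t : ℝ => t ^ β * Real.exp (κ * t)) volume 0 1 := by
    apply IntervalIntegrable.mul_continuousOn
    · exact intervalIntegral.intervalIntegrable_rpow' (by linarith)
    · exact (Real.continuous_exp.comp (continuous_const.mul continuous_id)).continuousOn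
  have hpt : ∀ x ∈ Set.Icc (0:ℝ) 1, L x ≤ x ^ β * Real.exp (κ * x) := by
    intro x hx
    rcases eq_or_lt_of_le hx.1 with h0 | h0
    · subst h0
      simp only [hL]
      rw [Real.zero_rpow (by linarith : a ≠ 0), Real.zero_rpow (by linarith : a + 1 ≠ 0),
        Real.zero_rpow (by linarith : β ≠ 0)]
      simp
    · have hx0 : (0:ℝ) < x := h0
      have e1 : x ^ a = x ^ β * Real.exp (Real.log x * κ) := by
        simp only [ha]
        rw [Real.rpow_add hx0, Real.rpow_def_of_pos hx0, Real.rpow_def_of_pos hx0]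
      have e2 : x ^ (a+1) = x ^ a * x := Real.rpow_add_one (ne_of_gt hx0) a
      have hLx : L x = (Real.exp κ * Real.exp (Real.log x * κ) * x ^ β)
          * (1 + κ * (x - 1 - Real.log x)) := by
        simp only [hL]; rw [e2, e1]; ring
      have hRx : x ^ β * Real.exp (κ * x) = (Real.exp κ * Real.exp (Real.log x * κ) * x ^ β)
          * Real.exp (κ * (x - 1 - Real.log x)) := by
        have h3 : Real.exp κ * Real.exp (Real.log x * κ) * Real.exp (κ * (x - 1 - Real.log x))
            = Real.exp (κ * x) := by
          rw [← Real.exp_add, ← Real.exp_add]; congr 1; ring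
        calc x ^ β * Real.exp (κ * x)
            = x ^ β * (Real.exp κ * Real.exp (Real.log x * κ)
                * Real.exp (κ * (x - 1 - Real.log x))) := by rw [h3]
          _ = (Real.exp κ * Real.exp (Real.log x * κ) * x ^ β)
                * Real.exp (κ * (x - 1 - Real.log x)) := by ring
      rw [hLx, hRx]
      apply mul_le_mul_of_nonneg_left _ (by positivity)
      linarith [Real.add_one_le_exp (κ * (x - 1 - Real.log x))]
  have hmono := intervalIntegral.integral_mono_on (by norm_num : (0:ℝ) ≤ 1) IL IU hpt
  -- compute the integral of L
  have i1 : (∫ t in (0:ℝ)..1, t ^ a) = 1/(a+1) := by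
    rw [integral_rpow (Or.inl (by linarith : (-1:ℝ) < a))]
    rw [Real.one_rpow, Real.zero_rpow (by linarith : a + 1 ≠ 0)]
    ring
  have i2 : (∫ t in (0:ℝ)..1, t ^ (a+1)) = 1/(a+2) := by
    rw [integral_rpow (Or.inl (by linarith : (-1:ℝ) < a+1))]
    rw [Real.one_rpow, Real.zero_rpow (by linarith : a + 1 + 1 ≠ 0)]
    ring
  have i3 : (∫ t in (0:ℝ)..1, t ^ a * Real.log t) = -(1/(a+1)^2) :=
    integral_rpow_mul_log hapos
  have hLint : (∫ t in (0:ℝ)..1, L t)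
      = Real.exp κ * ((1-κ)/(a+1) + κ/(a+2) + κ/(a+1)^2) := by
    simp only [hL]
    rw [intervalIntegral.integral_add ((IL1.const_mul _).add (IL2.const_mul _))
      (IL3.const_mul _),
      intervalIntegral.integral_add (IL1.const_mul _) (IL2.const_mul _),
      intervalIntegral.integral_const_mul, intervalIntegral.integral_const_mul,
      intervalIntegral.integral_const_mul, i1, i2, i3]
    ring
  -- deduce I ≥ (κ/p') * S
  have hexp1 : Real.exp (-κ) * Real.exp κ = 1 := by
    rw [← Real.exp_add]; simp
  have hIlow : (κ/p') * ((1-κ)/(a+1) + κ/(a+2) + κ/(a+1)^2) ≤ I := by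
    rw [hI]
    have hc : (0:ℝ) < κ/p' * Real.exp (-κ) := by positivity
    calc (κ/p') * ((1-κ)/(a+1) + κ/(a+2) + κ/(a+1)^2)
        = (κ/p') * Real.exp (-κ) * (∫ t in (0:ℝ)..1, L t) := by
          rw [hLint, show (κ/p') * Real.exp (-κ)
              * (Real.exp κ * ((1-κ)/(a+1) + κ/(a+2) + κ/(a+1)^2))
              = (Real.exp (-κ) * Real.exp κ)
                * ((κ/p') * ((1-κ)/(a+1) + κ/(a+2) + κ/(a+1)^2)) from by ring,
            hexp1, one_mul]
      _ ≤ (κ/p') * Real.exp (-κ) * ∫ t in (0:ℝ)..1, t ^ β * Real.exp (κ * t) := by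
          exact mul_le_mul_of_nonneg_left hmono hc.le
  -- key inequality at t₀
  have hkey := key_ineq ht0pos ht0lt1.le
  have hG2 : 5 * t₀^2 / ((1 + t₀) * (5 * t₀ + 7)) ≤ κ^2/(m*(m+1)) := by
    rw [div_le_div_iff₀ (by positivity) (by positivity)]
    rw [hκeq, hmeq]
    have hK : (0:ℝ) ≤ (2*b-5) * (t₀^2*(b*(1+t₀))) :=
      mul_nonneg (by linarith) (by positivity)
    nlinarith [hK]
  have hGm : g t₀ * (m*(m+1)) < κ^2 := by
    have h := lt_of_lt_of_le hkey hG2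
    rw [lt_div_iff₀ (by positivity : (0:ℝ) < m*(m+1))] at h
    exact h
  -- final comparison
  have hfrac : t₀/(t₀+1) = κ/m := by
    rw [hκeq, hmeq]; rw [div_eq_div_iff (by linarith) (by positivity)]; ring
  have hRHSeq : (1 / p') * (t₀ / (t₀ + 1)) * (1 + g t₀ / κ)
      = (κ/p') * (1/m + g t₀/(κ*m)) := by
    have hκne : κ ≠ 0 := ne_of_gt hκpos
    have hmne : m ≠ 0 := ne_of_gt hmpos
    have hpne : p' ≠ 0 := ne_of_gt hp'pos
    rw [hfrac]
    field_simp
    try ring_nf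
    try exact Or.inl trivial
  have hSgt : (κ/p') * (1/m + g t₀/(κ*m)) < (κ/p') * ((1-κ)/(a+1) + κ/(a+2) + κ/(a+1)^2) := by
    have hstep : 1/m + g t₀/(κ*m) < (1-κ)/(a+1) + κ/(a+2) + κ/(a+1)^2 := by
      have hSval : (1-κ)/(a+1) + κ/(a+2) + κ/(a+1)^2 = 1/m + κ/(m^2*(m+1)) := by
        rw [hm]
        have h1 : a + 1 ≠ 0 := by linarith
        have h2 : a + 2 ≠ 0 := by linarith
        field_simp
        ring
      rw [hSval]
      have : g t₀/(κ*m) < κ/(m^2*(m+1)) := by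
        rw [div_lt_div_iff₀ (by positivity) (by positivity)]
        nlinarith [mul_lt_mul_of_pos_right hGm hmpos]
      linarith
    exact mul_lt_mul_of_pos_left hstep (by positivity)
  rw [gt_iff_lt, hRHSeq]
  exact lt_of_lt_of_le hSgt hIlow
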